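/- arXiv:1205.0513 — 2 statements merged into one kernel-verified Lean document; each statement's English description precedes it below -/
import Mathlib

section
/- Let G be a group with a finite symmetric generating set S₀ (not containing the identity) whose Cayley graph is δ-hyperbolic, and let D ≥ 8δ + 1. Let H be a finite subgroup of G. Then for every finite subset S of G there exists a finite subset T of G with S ⊆ T and hT = T for all h ∈ H, such that the subgraph of the 1-skeleton of the Rips complex P_D(G) induced on T is dismantlable. -/
open SimpleGraph

variable {V : Type*}

/-- The closed neighbourhood of a vertex: the vertex together with all its neighbours. -/
def closedNbhd (G : SimpleGraph V) (ρ : V) : Set V := insert ρ {w | G.Adj ρ w}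

/-- `ρ` is dominated by `π` within the subgraph of `G` induced on `S`:
`π ∈ S`, `π ≠ ρ`, and `N(ρ) ∩ S ⊆ N(π)`. -/
def DominatedIn (G : SimpleGraph V) (S : Set V) (ρ π : V) : Prop :=
  π ∈ S ∧ π ≠ ρ ∧ ∀ w ∈ S, w ∈ closedNbhd G ρ → w ∈ closedNbhd G π

/-- The subgraph of `G` induced on `S` is dismantlable: the vertices of `S` can be
arranged in a (finite) list such that each vertex except the last is dominated in the
subgraph induced on it and the later vertices. -/
def DismantlableOn (G : SimpleGraph V) (S : Set V) : Prop :=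
  ∃ l : List V, l.Nodup ∧ (∀ v, v ∈ l ↔ v ∈ S) ∧
    ∀ (i : ℕ) (h : i < l.length), i < l.length - 1 →
      ∃ π, DominatedIn G {w | w ∈ l.drop i} (l[i]'h) π

/-- A graph is dismantlable if the subgraph induced on all of its vertices is. -/
def Dismantlable (G : SimpleGraph V) : Prop := DismantlableOn G Set.univ

/-- The set `Π*(ρ)` of all vertices appearing in pairs of `Π ρ`. -/
def PiStar (Pr : V → Finset (Sym2 V)) (ρ : V) : Set V := {v | ∃ p ∈ Pr ρ, v ∈ p}

/-- `Pr` is a `σ`-projection: it assigns to each vertex `ρ ≠ σ` a nonempty finite set of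
unordered pairs of vertices such that (i) every finite set `R` containing a vertex other
than `σ` has an exposed vertex, and (ii) there is no cycle `ρ₀, …, ρ_{m-1}` with
`ρ_{i+1} ∈ Π*(ρ_i)` (indices mod `m`). -/
structure IsSigmaProjection (G : SimpleGraph V) (σ : V) (Pr : V → Finset (Sym2 V)) : Prop where
  nonempty : ∀ ρ, ρ ≠ σ → (Pr ρ).Nonempty
  exposed : ∀ R : Finset V, (∃ ρ ∈ R, ρ ≠ σ) →
    ∃ ρ ∈ R, ρ ≠ σ ∧ ∃ p ∈ Pr ρ, ∀ π ∈ p,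
      ∀ w ∈ R, w ∈ closedNbhd G ρ → w ∈ closedNbhd G π
  acyclic : ¬ ∃ m : ℕ, 0 < m ∧ ∃ f : ZMod m → V,
    ∀ i, f i ≠ σ ∧ f (i + 1) ∈ PiStar Pr (f i)

/-- `R` is `Π`-convex: for every `ρ ∈ R` other than `σ`, each pair in `Π ρ` meets `R`. -/
def PiConvex (σ : V) (Pr : V → Finset (Sym2 V)) (R : Set V) : Prop :=
  ∀ ρ ∈ R, ρ ≠ σ → ∀ p ∈ Pr ρ, ∃ v ∈ p, v ∈ R

/-- The orbit `HR` of a set `R` under a group action. -/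
def orbitSet (H : Type*) [Group H] [MulAction H V] (R : Set V) : Set V :=
  {x | ∃ h : H, ∃ ρ ∈ R, x = h • ρ}

/-- The geometric realization of the flag complex of `G` inside `ℝ^V`: the union over
all (nonempty) cliques of the convex hulls of the corresponding standard basis vectors. -/
def flagRealization [DecidableEq V] (G : SimpleGraph V) : Set (V → ℝ) :=
  ⋃ (Δ : Set V) (_ : Δ.Nonempty) (_ : G.IsClique Δ),
    convexHull ℝ ((fun v => (Pi.single v 1 : V → ℝ)) '' Δ)

/-- A walk is a geodesic if its length equals the distance between its endpoints. -/
def IsGeodesic (G : SimpleGraph V) {u v : V} (p : G.Walk u v) : Prop :=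
  p.length = G.dist u v

/-- `G` is `δ`-hyperbolic: for any geodesic triangle, each vertex on one side is within
distance `δ` of some vertex on the union of the other two sides. -/
def Hyperbolic (G : SimpleGraph V) (δ : ℕ) : Prop :=
  ∀ (u v w : V) (p : G.Walk u v) (q : G.Walk v w) (r : G.Walk w u),
    IsGeodesic G p → IsGeodesic G q → IsGeodesic G r →
    ∀ t ∈ p.support, ∃ s, (s ∈ q.support ∨ s ∈ r.support) ∧ G.dist t s ≤ δ

/-- The Rips graph `Γ_D`: same vertices, two distinct vertices adjacent iff their
graph distance in `G` is at most `D`. -/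
def ripsGraph (G : SimpleGraph V) (D : ℕ) : SimpleGraph V where
  Adj u v := u ≠ v ∧ G.dist u v ≤ D
  symm := by
    constructor
    intro u v h
    exact ⟨h.1.symm, by rw [SimpleGraph.dist_comm]; exact h.2⟩
  loopless := by
    constructor
    intro v h
    exact h.1 rfl

/-- The ball of radius `r` around a set `C` of vertices. -/
def ballSet (G : SimpleGraph V) (C : Set V) (r : ℕ) : Set V :=
  {v | ∃ c ∈ C, G.dist v c ≤ r}


-- ## Auxiliary lemmas
section AuxGeneric
variable {V : Type*}
lemma dismantlableOn_cons [DecidableEq V] {Γ' : SimpleGraph V} {F : Finset V} {ρ π : V}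
    (hρ : ρ ∈ F) (hdom : DominatedIn Γ' ↑F ρ π)
    (hrec : DismantlableOn Γ' ↑(F.erase ρ)) : DismantlableOn Γ' ↑F := by
  obtain ⟨l', hnd, hmem, hidx⟩ := hrec
  refine ⟨ρ :: l', ?_, ?_, ?_⟩
  · refine List.nodup_cons.mpr ⟨fun h => ?_, hnd⟩
    exact (Finset.mem_erase.mp (by exact_mod_cast (hmem ρ).mp h)).1 rfl
  · intro v
    simp only [List.mem_cons, hmem, Finset.coe_erase, Set.mem_diff,
      Set.mem_singleton_iff, Finset.mem_coe]
    constructor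
    · rintro (rfl | ⟨h1, _⟩) <;> simp_all
    · intro hv
      by_cases hvρ : v = ρ
      · exact Or.inl hvρ
      · exact Or.inr ⟨hv, hvρ⟩
  · intro i hi hi'
    match i with
    | 0 =>
      refine ⟨π, ?_⟩
      have hset : {w | w ∈ (ρ :: l').drop 0} = (↑F : Set V) := by
        ext w
        simp only [List.drop_zero, Set.mem_setOf_eq, List.mem_cons, hmem, Finset.coe_erase,
          Set.mem_diff, Set.mem_singleton_iff, Finset.mem_coe]
        constructor
        · rintro (rfl | ⟨h1, _⟩) <;> simp_all
        · intro hv; by_cases hvρ : w = ρ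
          · exact Or.inl hvρ
          · exact Or.inr ⟨hv, hvρ⟩
      rw [show ((ρ :: l')[0]'hi) = ρ from rfl, hset]
      exact hdom
    | (j+1) =>
      have hj : j < l'.length := by simpa using hi
      have hj' : j < l'.length - 1 := by
        simp only [List.length_cons] at hi'
        omega
      have := hidx j hj hj'
      simpa using this

lemma peel_to_dismantlable [DecidableEq V] (Γ' : SimpleGraph V) (g : V → ℕ) (T : Set V)
    (peel : ∀ F : Finset V, ↑F ⊆ T → (∀ x ∈ T, x ∉ F → ∀ y ∈ F, g y ≤ g x) → 2 ≤ F.card →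
       ∀ ρ ∈ F, (∀ y ∈ F, g y ≤ g ρ) → ∃ π, DominatedIn Γ' ↑F ρ π) :
    ∀ F : Finset V, ↑F ⊆ T → (∀ x ∈ T, x ∉ F → ∀ y ∈ F, g y ≤ g x) → DismantlableOn Γ' ↑F := by
  intro F
  induction F using Finset.strongInduction with
  | _ F ih =>
    intro hFT hdown
    rcases F.eq_empty_or_nonempty with rfl | hne
    · exact ⟨[], by simp, by simp, by simp⟩
    obtain ⟨ρ, hρF, hρmax⟩ := F.exists_max_image g hne
    rcases Nat.lt_or_ge F.card 2 with hc | hc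
    · -- card = 1
      have : F = {ρ} := by
        apply Finset.eq_singleton_iff_unique_mem.mpr
        refine ⟨hρF, fun y hy => ?_⟩
        by_contra hne'
        have := Finset.one_lt_card.mpr ⟨y, hy, ρ, hρF, hne'⟩
        omega
      subst this
      exact ⟨[ρ], by simp, by simp, by intro i hi hi'; simp at hi'⟩
    · obtain ⟨π, hπ⟩ := peel F hFT hdown hc ρ hρF hρmax
      have herase : (F.erase ρ) ⊂ F := Finset.erase_ssubset hρF
      have hrec := ih (F.erase ρ) herase
        (fun x hx => hFT (Finset.mem_erase.mp hx).2)
        (by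
          intro x hxT hxF y hyF
          by_cases hxρ : x = ρ
          · subst hxρ; exact hρmax y (Finset.mem_erase.mp hyF).2
          · by_cases hxF' : x ∈ F
            · exact absurd (Finset.mem_erase.mpr ⟨hxρ, hxF'⟩) hxF
            · exact hdown x hxT hxF' y (Finset.mem_erase.mp hyF).2)
      exact dismantlableOn_cons hρF hπ hrec

lemma dist_getVert_le {X : Type*} {Γ' : SimpleGraph X} (hc : Γ'.Connected)
    {u v : X} (p : Γ'.Walk u v) (j : ℕ) : Γ'.dist u (p.getVert j) ≤ j := by
  induction j with
  | zero => simp [p.getVert_zero]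
  | succ n ihn =>
    rcases Nat.lt_or_ge n p.length with h | h
    · have hadj := p.adj_getVert_succ h
      have htri : Γ'.dist u (p.getVert (n+1)) ≤
          Γ'.dist u (p.getVert n) + Γ'.dist (p.getVert n) (p.getVert (n+1)) := hc.dist_triangle
      have h2 : Γ'.dist (p.getVert n) (p.getVert (n+1)) = 1 := dist_eq_one_iff_adj.mpr hadj
      omega
    · have e1 : p.getVert (n+1) = v := p.getVert_of_length_le (by omega)
      have e2 : p.getVert n = v := p.getVert_of_length_le h
      rw [e1]; rw [e2] at ihn; omega

lemma geodesic_getVert {X : Type*} {Γ' : SimpleGraph X} (hc : Γ'.Connected)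
    {u v : X} (p : Γ'.Walk u v) (hp : p.length = Γ'.dist u v) {i : ℕ} (hi : i ≤ p.length) :
    Γ'.dist u (p.getVert i) = i ∧ Γ'.dist (p.getVert i) v = p.length - i := by
  have h1 := dist_getVert_le hc p i
  have h2 : Γ'.dist (p.getVert i) v ≤ p.length - i := by
    have := dist_getVert_le hc p.reverse (p.length - i)
    have e : p.reverse.getVert (p.length - i) = p.getVert i := by
      rw [SimpleGraph.Walk.getVert_reverse]
      congr 1
      omega
    rw [e] at this
    rw [SimpleGraph.dist_comm]
    exact this
  have h3 : Γ'.dist u v ≤ Γ'.dist u (p.getVert i) + Γ'.dist (p.getVert i) v := hc.dist_triangle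
  rw [← hp] at h3
  omega

lemma geodesic_support_getVert {X : Type*} {Γ' : SimpleGraph X} (hc : Γ'.Connected)
    {u v : X} (p : Γ'.Walk u v) (hp : p.length = Γ'.dist u v) {s : X} (hs : s ∈ p.support) :
    Γ'.dist u s + Γ'.dist s v = Γ'.dist u v := by
  obtain ⟨j, hj, hjl⟩ := SimpleGraph.Walk.mem_support_iff_exists_getVert.mp hs
  obtain ⟨e1, e2⟩ := geodesic_getVert hc p hp hjl
  rw [← hj, e1, e2, ← hp]
  omega


end AuxGeneric

section AuxCayley
variable {G : Type*} [Group G] (S₀ : Finset G)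

local notation "Γ" => (SimpleGraph.fromRel fun g h : G => g⁻¹ * h ∈ S₀)

lemma cayley_adj {u v : G} (hsym : ∀ s ∈ S₀, s⁻¹ ∈ S₀) :
    (Γ).Adj u v ↔ u ≠ v ∧ u⁻¹ * v ∈ S₀ := by
  rw [fromRel_adj]
  constructor
  · rintro ⟨h, h2 | h2⟩
    · exact ⟨h, h2⟩
    · refine ⟨h, ?_⟩
      have := hsym _ h2
      rwa [mul_inv_rev, inv_inv] at this
  · rintro ⟨h, h2⟩; exact ⟨h, Or.inl h2⟩

def cayleyIso (a : G) : (Γ) ≃g (Γ) where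
  toEquiv := Equiv.mulLeft a
  map_rel_iff' := by
    intro u v
    have key : (a * u)⁻¹ * (a * v) = u⁻¹ * v := by group
    have key2 : (a * v)⁻¹ * (a * u) = v⁻¹ * u := by group
    simp only [Equiv.coe_mulLeft, fromRel_adj, key, key2, ne_eq, mul_right_cancel_iff,
      mul_left_cancel_iff]

lemma cayley_reachable_one (hone : (1 : G) ∉ S₀)
    (hgen : Subgroup.closure (S₀ : Set G) = ⊤) (g : G) : (Γ).Reachable 1 g := by
  have hg : g ∈ Subgroup.closure (S₀ : Set G) := by rw [hgen]; trivial
  induction hg using Subgroup.closure_induction with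
  | mem x hx =>
    refine (Adj.reachable ?_)
    rw [fromRel_adj]
    exact ⟨fun h => hone (h ▸ hx), Or.inl (by simpa using hx)⟩
  | one => exact Reachable.refl 1
  | mul x y hx hy ihx ihy =>
    refine ihx.trans ?_
    have := (Iso.reachable_iff (φ := cayleyIso S₀ x) (u := 1) (v := y)).mpr ihy
    simpa [cayleyIso] using this
  | inv x hx ihx =>
    have := (Iso.reachable_iff (φ := cayleyIso S₀ x⁻¹) (u := 1) (v := x)).mpr ihx
    simp only [cayleyIso] at this
    have h2 : (Γ).Reachable x⁻¹ 1 := by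
      simpa using this
    exact h2.symm

lemma cayley_connected (hone : (1 : G) ∉ S₀)
    (hgen : Subgroup.closure (S₀ : Set G) = ⊤) : (Γ).Connected := by
  have hpre : (Γ).Preconnected := fun u v =>
    (cayley_reachable_one S₀ hone hgen u).symm.trans (cayley_reachable_one S₀ hone hgen v)
  haveI : Nonempty G := ⟨1⟩
  exact Connected.mk hpre


lemma cayley_ball_finite (hsym : ∀ s ∈ S₀, s⁻¹ ∈ S₀) (hc : (Γ).Connected) (n : ℕ) :
    {x : G | (Γ).dist 1 x ≤ n}.Finite := by
  classical
  induction n with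
  | zero =>
    refine Set.Finite.subset (Set.finite_singleton 1) ?_
    intro x hx
    simp only [Set.mem_setOf_eq, Nat.le_zero] at hx
    have := hc.dist_eq_zero_iff.mp hx
    simp [this.symm]
  | succ n ihn =>
    refine Set.Finite.subset (ihn.union (Set.Finite.image2 (· * ·) ihn S₀.finite_toSet)) ?_
    intro x hx
    simp only [Set.mem_setOf_eq] at hx
    rcases Nat.lt_or_ge ((Γ).dist 1 x) (n+1) with h | h
    · exact Or.inl (by simpa using Nat.lt_succ_iff.mp h)
    have hd : (Γ).dist 1 x = n + 1 := le_antisymm hx h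
    obtain ⟨p, hp⟩ := (hc 1 x).exists_walk_length_eq_dist
    have hlen : p.length = n + 1 := by rw [hp, hd]
    have hy := (geodesic_getVert hc p hp (i := n) (by omega)).1
    have hadj : (Γ).Adj (p.getVert n) (p.getVert (n+1)) := p.adj_getVert_succ (by omega)
    have hx' : p.getVert (n+1) = x := by
      rw [show n + 1 = p.length from hlen.symm]; exact p.getVert_length
    rw [hx'] at hadj
    right
    refine ⟨p.getVert n, by simp only [Set.mem_setOf_eq]; omega, (p.getVert n)⁻¹ * x, ?_, by group⟩
    exact ((cayley_adj S₀ hsym).mp hadj).2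

lemma cayley_dist_mul' (hc : (Γ).Connected) (a u v : G) :
    (Γ).dist (a * u) (a * v) = (Γ).dist u v := by
  have key : ∀ (b x y : G), (Γ).dist (b * x) (b * y) ≤ (Γ).dist x y := by
    intro b x y
    obtain ⟨p, hp⟩ := (hc x y).exists_walk_length_eq_dist
    have := SimpleGraph.dist_le (p.map (cayleyIso S₀ b).toHom)
    rw [SimpleGraph.Walk.length_map, hp] at this
    simpa [cayleyIso, hp] using this
  refine le_antisymm (key a u v) ?_
  have := key a⁻¹ (a * u) (a * v)
  simpa [mul_assoc] using this

lemma cayley_ball_finite' (hsym : ∀ s ∈ S₀, s⁻¹ ∈ S₀) (hc : (Γ).Connected) (c : G) (n : ℕ) :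
    {x : G | (Γ).dist x c ≤ n}.Finite := by
  have := (cayley_ball_finite S₀ hsym hc n).image (fun y => c * y)
  refine Set.Finite.subset this ?_
  intro x hx
  simp only [Set.mem_setOf_eq] at hx
  refine ⟨c⁻¹ * x, ?_, by group⟩
  simp only [Set.mem_setOf_eq]
  have : (Γ).dist (c * 1) (c * (c⁻¹ * x)) = (Γ).dist 1 (c⁻¹ * x) := cayley_dist_mul' S₀ hc c _ _
  rw [mul_one, show c * (c⁻¹ * x) = x by group] at this
  rw [← this, SimpleGraph.dist_comm]
  exact hx




lemma exists_center (hsym : ∀ s ∈ S₀, s⁻¹ ∈ S₀) (hc : (Γ).Connected)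
    (hdm : ∀ a u v : G, (Γ).dist (a * u) (a * v) = (Γ).dist u v)
    (hbf : ∀ (c : G) (n : ℕ), {x : G | (Γ).dist x c ≤ n}.Finite)
    (δ : ℕ) (hhyp : Hyperbolic (Γ) δ)
    (H : Subgroup G) (hHfin : (H : Set G).Finite) :
    ∃ C : Set G, C.Finite ∧ C.Nonempty ∧ (∀ h ∈ H, ∀ x ∈ C, h * x ∈ C) ∧
      (∀ x ∈ C, ∀ y ∈ C, (Γ).dist x y ≤ 4 * δ + 1) := by
  classical
  set HF : Finset G := hHfin.toFinset with hHF
  have h1HF : (1 : G) ∈ HF := by simp [hHF, Set.Finite.mem_toFinset]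
  set f : G → ℕ := fun x => HF.sup (fun h => (Γ).dist x h) with hf
  set m : ℕ := sInf (Set.range f) with hm
  have hmmem : m ∈ Set.range f := Nat.sInf_mem (Set.range_nonempty f)
  refine ⟨{x | f x = m}, ?_, ?_, ?_, ?_⟩
  · -- finite
    refine Set.Finite.subset (hbf 1 m) ?_
    intro x hx
    simp only [Set.mem_setOf_eq] at hx ⊢
    calc (Γ).dist x 1 ≤ f x := Finset.le_sup (f := fun h => (Γ).dist x h) h1HF
    _ = m := hx
  · obtain ⟨x, hx⟩ := hmmem
    exact ⟨x, hx⟩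
  · -- invariance
    intro h hh x hx
    simp only [Set.mem_setOf_eq] at hx ⊢
    have key : f (h * x) = f x := by
      have reorder : ∀ h' : G, (Γ).dist (h * x) h' = (Γ).dist x (h⁻¹ * h') := by
        intro h'
        have := hdm h⁻¹ (h * x) h'
        simp only [mul_assoc] at this
        simpa using this.symm
      have himg : HF.image (fun h' => h⁻¹ * h') = HF := by
        ext y
        simp only [Finset.mem_image, hHF, Set.Finite.mem_toFinset, SetLike.mem_coe]
        constructor
        · rintro ⟨z, hz, rfl⟩; exact H.mul_mem (H.inv_mem hh) hz
        · intro hy; exact ⟨h * y, H.mul_mem hh hy, by group⟩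
      calc f (h * x) = HF.sup (fun h' => (Γ).dist x (h⁻¹ * h')) := by
            simp only [hf]; exact Finset.sup_congr rfl (fun h' _ => reorder h')
        _ = (HF.image (fun h' => h⁻¹ * h')).sup (fun c => (Γ).dist x c) := by
            rw [Finset.sup_image]; rfl
        _ = f x := by rw [himg]
    rw [key, hx]
  · -- diameter
    intro x hx y hy
    simp only [Set.mem_setOf_eq] at hx hy
    obtain ⟨p, hp⟩ := (hc x y).exists_walk_length_eq_dist
    set L := p.length with hL
    rcases Nat.eq_zero_or_pos L with h0 | hLpos
    · rw [← hp, h0]; omega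
    set i := (L + 1) / 2 with hi
    have hiL : i ≤ L := by omega
    set z := p.getVert i with hz
    obtain ⟨e1, e2⟩ := geodesic_getVert hc p hp hiL
    rw [← hz] at e1 e2
    have hzsup : z ∈ p.support :=
      SimpleGraph.Walk.mem_support_iff_exists_getVert.mpr ⟨i, hz.symm, hiL⟩
    have key : ∀ h' ∈ HF, (Γ).dist z h' + (L - i) ≤ m + 2 * δ := by
      intro h' hh'
      obtain ⟨q, hq⟩ := (hc y h').exists_walk_length_eq_dist
      obtain ⟨r, hr⟩ := (hc h' x).exists_walk_length_eq_dist
      obtain ⟨s, hs, hds⟩ := hhyp x y h' p q r hp hq hr z hzsup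
      have hdyh : (Γ).dist y h' ≤ m := by
        rw [← hy]; exact Finset.le_sup (f := fun h => (Γ).dist y h) hh'
      have hdxh : (Γ).dist x h' ≤ m := by
        rw [← hx]; exact Finset.le_sup (f := fun h => (Γ).dist x h) hh'
      rcases hs with hs | hs
      · -- s on side y → h'
        have hsum := geodesic_support_getVert hc q hq hs
        have t1 : (Γ).dist z h' ≤ (Γ).dist z s + (Γ).dist s h' := hc.dist_triangle
        have t2 : (Γ).dist y z ≤ (Γ).dist y s + (Γ).dist s z := hc.dist_triangle
        have e2' : (Γ).dist y z = L - i := by rw [SimpleGraph.dist_comm]; exact e2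
        have hdzs : (Γ).dist s z = (Γ).dist z s := SimpleGraph.dist_comm ..
        omega
      · -- s on side h' → x
        have hsum := geodesic_support_getVert hc r hr hs
        have t1 : (Γ).dist z h' ≤ (Γ).dist z s + (Γ).dist s h' := hc.dist_triangle
        have t2 : (Γ).dist x z ≤ (Γ).dist x s + (Γ).dist s z := hc.dist_triangle
        have hdzs : (Γ).dist s z = (Γ).dist z s := SimpleGraph.dist_comm ..
        have hdsh : (Γ).dist s h' = (Γ).dist h' s := SimpleGraph.dist_comm ..
        have hdsx : (Γ).dist s x = (Γ).dist x s := SimpleGraph.dist_comm ..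
        have hdhx : (Γ).dist h' x = (Γ).dist x h' := SimpleGraph.dist_comm ..
        have hineq : L - i ≤ i := by omega
        omega
    have hfz : m ≤ f z := Nat.sInf_le ⟨z, rfl⟩
    have hfz2 : f z + (L - i) ≤ m + 2 * δ := by
      have h1 := key 1 h1HF
      have hsle : f z ≤ m + 2 * δ - (L - i) := by
        apply Finset.sup_le
        intro h' hh'
        have := key h' hh'
        omega
      omega
    rw [← hp]
    omega




lemma domination_step (hc : (Γ).Connected) {δ : ℕ} (hhyp : Hyperbolic (Γ) δ)
    {D : ℕ} (hD : 8 * δ + 1 ≤ D)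
    (CF : Finset G) (hCne : CF.Nonempty)
    (hdiam : ∀ x ∈ CF, ∀ y ∈ CF, (Γ).dist x y ≤ 4 * δ + 1)
    (gd : G → ℕ)
    (hgd1 : ∀ x : G, ∃ c ∈ CF, gd x = (Γ).dist x c)
    (hgd2 : ∀ (x : G), ∀ c ∈ CF, gd x ≤ (Γ).dist x c)
    (ρ : G) (hρ : max (2 * δ) 1 ≤ gd ρ) :
    ∃ π : G, (Γ).dist ρ π = max (2 * δ) 1 ∧ gd π + max (2 * δ) 1 = gd ρ ∧
      ∀ w : G, (Γ).dist ρ w ≤ D → gd w ≤ gd ρ → (Γ).dist π w ≤ D := by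
  set k := max (2 * δ) 1 with hk
  have hk1 : 1 ≤ k := by omega
  have hk2 : 2 * δ ≤ k := by omega
  have hk3 : k ≤ 2 * δ + 1 := by omega
  obtain ⟨c, hcC, hgc⟩ := hgd1 ρ
  obtain ⟨p, hp⟩ := (hc ρ c).exists_walk_length_eq_dist
  have hplen : p.length = gd ρ := by rw [hp, hgc]
  have hkL : k ≤ p.length := by omega
  set π := p.getVert k with hπ
  obtain ⟨eρπ, eπc⟩ := geodesic_getVert hc p hp hkL
  rw [← hπ] at eρπ eπc
  rw [hplen] at eπc
  have eπc' : (Γ).dist π c + k = gd ρ := by omega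
  have hgπ_le : gd π + k ≤ gd ρ := by
    have := hgd2 π c hcC
    omega
  have hgπ_ge : gd ρ ≤ gd π + k := by
    obtain ⟨c', hc', e'⟩ := hgd1 π
    have t : (Γ).dist ρ c' ≤ (Γ).dist ρ π + (Γ).dist π c' := hc.dist_triangle
    have := hgd2 ρ c' hc'
    omega
  have hgπ : gd π + k = gd ρ := le_antisymm hgπ_le hgπ_ge
  refine ⟨π, eρπ, hgπ, ?_⟩
  intro w hw hgw
  by_cases hwρ : w = ρ
  · subst hwρ
    rw [SimpleGraph.dist_comm, eρπ]
    omega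
  obtain ⟨cw, hcwC, hgcw⟩ := hgd1 w
  obtain ⟨q, hq⟩ := (hc c w).exists_walk_length_eq_dist
  obtain ⟨r, hr⟩ := (hc w ρ).exists_walk_length_eq_dist
  have hπsup : π ∈ p.support :=
    SimpleGraph.Walk.mem_support_iff_exists_getVert.mpr ⟨k, hπ.symm, hkL⟩
  obtain ⟨s, hs, hds⟩ := hhyp ρ c w p q r hp hq hr π hπsup
  rcases hs with hs | hs
  · -- s on side c → w
    have hsum : (Γ).dist c s + (Γ).dist s w = (Γ).dist c w := geodesic_support_getVert hc q hq hs
    have hdcw_le : (Γ).dist c w ≤ gd w + (4 * δ + 1) := by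
      have t : (Γ).dist c w ≤ (Γ).dist c cw + (Γ).dist cw w := hc.dist_triangle
      have h1 : (Γ).dist c cw ≤ 4 * δ + 1 := hdiam c hcC cw hcwC
      have h2 : (Γ).dist cw w = (Γ).dist w cw := SimpleGraph.dist_comm ..
      omega
    have t1 : (Γ).dist π w ≤ (Γ).dist π s + (Γ).dist s w := hc.dist_triangle
    have t3 : (Γ).dist π c ≤ (Γ).dist π s + (Γ).dist s c := hc.dist_triangle
    have hcsc : (Γ).dist s c = (Γ).dist c s := SimpleGraph.dist_comm ..
    by_cases hcase : 2 ≤ D ∨ 1 ≤ δ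
    · rcases hcase with h2D | h1δ <;> omega
    push_neg at hcase
    obtain ⟨hD2, hδ0⟩ := hcase
    have hδ : δ = 0 := by omega
    have hD1 : D = 1 := by omega
    subst hδ; subst hD1
    have hk1' : k = 1 := by omega
    -- δ = 0, D = 1
    have hπs : π = s := by
      have h0 : (Γ).dist π s = 0 := by omega
      exact (hc π s).dist_eq_zero_iff.mp h0
    rw [hπs] at eπc' hgπ ⊢
    have hdcs : (Γ).dist c s = (Γ).dist s c := SimpleGraph.dist_comm ..
    rcases le_or_gt ((Γ).dist c w) (gd ρ) with hle | hgt
    · omega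
    have hdcw : (Γ).dist c w = gd ρ + 1 := by
      have t : (Γ).dist c w ≤ (Γ).dist c ρ + (Γ).dist ρ w := hc.dist_triangle
      have h2 : (Γ).dist c ρ = (Γ).dist ρ c := SimpleGraph.dist_comm ..
      omega
    have hgw1 : 1 ≤ gd w := by
      by_contra h0
      have hwcw : w = cw := (hc w cw).dist_eq_zero_iff.mp (by omega)
      have := hdiam c hcC cw hcwC
      rw [← hwcw] at this
      omega
    have hcwc : cw ≠ c := by
      intro he
      rw [he] at hgcw
      have : (Γ).dist w c = (Γ).dist c w := SimpleGraph.dist_comm ..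
      omega
    have hdcwc : (Γ).dist cw c = 1 := by
      have h1 : (Γ).dist cw c ≤ 4 * 0 + 1 := hdiam cw hcwC c hcC
      have h2 : (Γ).dist cw c ≠ 0 := fun h0 => hcwc ((hc cw c).dist_eq_zero_iff.mp h0)
      omega
    obtain ⟨q2, hq2⟩ := (hc w cw).exists_walk_length_eq_dist
    obtain ⟨q3, hq3⟩ := (hc cw c).exists_walk_length_eq_dist
    obtain ⟨s2, hs2, hds2⟩ := hhyp c w cw q q2 q3 hq hq2 hq3 s hs
    have hseq : s2 = s := ((hc s s2).dist_eq_zero_iff.mp (by omega)).symm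
    rw [hseq] at hs2
    rcases hs2 with hs2 | hs2
    · -- s on side w → cw
      have hsum3 : (Γ).dist w s + (Γ).dist s cw = (Γ).dist w cw :=
        geodesic_support_getVert hc q2 hq2 hs2
      have h2 : gd s ≤ (Γ).dist s cw := hgd2 s cw hcwC
      have h3 : (Γ).dist s w = (Γ).dist w s := SimpleGraph.dist_comm ..
      omega
    · -- s on side cw → c
      have hsum4 : (Γ).dist cw s + (Γ).dist s c = (Γ).dist cw c :=
        geodesic_support_getVert hc q3 hq3 hs2
      rcases Nat.eq_zero_or_pos ((Γ).dist cw s) with h0 | hpos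
      · -- s = cw : contradiction via arithmetic
        have h2 : gd s ≤ (Γ).dist s cw := hgd2 s cw hcwC
        have h3 : (Γ).dist s cw = (Γ).dist cw s := SimpleGraph.dist_comm ..
        omega
      · -- dist s c = 0, i.e. s = c
        exfalso
        have hsc0 : (Γ).dist s c = 0 := by omega
        have hgρ1 : gd ρ = 1 := by omega
        have hgw' : gd w = 1 := by omega
        have hdcws : (Γ).dist cw s = 1 := by omega
        have tA : (Γ).dist c w ≤ (Γ).dist c s + (Γ).dist s w := hc.dist_triangle
        have tB : (Γ).dist s w ≤ (Γ).dist s c + (Γ).dist c w := hc.dist_triangle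
        have hdsw : (Γ).dist s w = 2 := by omega
        have tC : (Γ).dist ρ c ≤ (Γ).dist ρ s + (Γ).dist s c := hc.dist_triangle
        have tD : (Γ).dist ρ s ≤ (Γ).dist ρ c + (Γ).dist c s := hc.dist_triangle
        have hdρs : (Γ).dist ρ s = 1 := by omega
        have hadj1 : (Γ).Adj w cw := by
          have h1 : (Γ).dist w cw = 1 := by omega
          exact SimpleGraph.dist_eq_one_iff_adj.mp h1
        have hadj2 : (Γ).Adj cw s := SimpleGraph.dist_eq_one_iff_adj.mp hdcws
        have hadj3 : (Γ).Adj s ρ := by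
          have h1 : (Γ).dist s ρ = 1 := by
            rw [SimpleGraph.dist_comm]; omega
          exact SimpleGraph.dist_eq_one_iff_adj.mp h1
        have hadj4 : (Γ).Adj ρ w := by
          have h0' : (Γ).dist ρ w ≠ 0 := fun h0' => hwρ ((hc ρ w).dist_eq_zero_iff.mp h0').symm
          have h1 : (Γ).dist ρ w = 1 := by omega
          exact SimpleGraph.dist_eq_one_iff_adj.mp h1
        set p3 : (Γ).Walk w s :=
          SimpleGraph.Walk.cons hadj1 (SimpleGraph.Walk.cons hadj2 SimpleGraph.Walk.nil) with hp3
        have hp3len : p3.length = (Γ).dist w s := by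
          simp only [hp3, SimpleGraph.Walk.length_cons, SimpleGraph.Walk.length_nil]
          have hcm : (Γ).dist w s = (Γ).dist s w := SimpleGraph.dist_comm ..
          omega
        set e2 : (Γ).Walk s ρ := SimpleGraph.Walk.cons hadj3 SimpleGraph.Walk.nil with he2
        have he2len : e2.length = (Γ).dist s ρ := by
          simp only [he2, SimpleGraph.Walk.length_cons, SimpleGraph.Walk.length_nil]
          rw [SimpleGraph.dist_eq_one_iff_adj.mpr hadj3]
        set e3 : (Γ).Walk ρ w := SimpleGraph.Walk.cons hadj4 SimpleGraph.Walk.nil with he3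
        have he3len : e3.length = (Γ).dist ρ w := by
          simp only [he3, SimpleGraph.Walk.length_cons, SimpleGraph.Walk.length_nil]
          rw [SimpleGraph.dist_eq_one_iff_adj.mpr hadj4]
        have hcwsup : cw ∈ p3.support := by simp [hp3]
        obtain ⟨s3, hs3, hds3⟩ := hhyp w s ρ p3 e2 e3 hp3len he2len he3len cw hcwsup
        have hs3eq : s3 = cw := ((hc cw s3).dist_eq_zero_iff.mp (by omega)).symm
        rw [hs3eq] at hs3
        have hgcw0 : gd cw ≤ 0 := by
          have h2 := hgd2 cw cw hcwC
          have h3 : (Γ).dist cw cw = 0 := SimpleGraph.dist_self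
          omega
        rcases hs3 with hs3 | hs3
        · simp only [he2, SimpleGraph.Walk.support_cons, SimpleGraph.Walk.support_nil,
            List.mem_cons, List.not_mem_nil, or_false] at hs3
          rcases hs3 with h | h
          · rw [h] at hdcws
            have : (Γ).dist s s = 0 := SimpleGraph.dist_self
            omega
          · rw [← h] at hgρ1
            omega
        · simp only [he3, SimpleGraph.Walk.support_cons, SimpleGraph.Walk.support_nil,
            List.mem_cons, List.not_mem_nil, or_false] at hs3
          rcases hs3 with h | h
          · rw [← h] at hgρ1
            omega
          · rw [← h] at hgw'
            omega
  · -- s on side w → ρ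
    have hsum : (Γ).dist w s + (Γ).dist s ρ = (Γ).dist w ρ := geodesic_support_getVert hc r hr hs
    have t1 : (Γ).dist π w ≤ (Γ).dist π s + (Γ).dist s w := hc.dist_triangle
    have t2 : (Γ).dist ρ π ≤ (Γ).dist ρ s + (Γ).dist s π := hc.dist_triangle
    have c1 : (Γ).dist s w = (Γ).dist w s := SimpleGraph.dist_comm ..
    have c2 : (Γ).dist ρ s = (Γ).dist s ρ := SimpleGraph.dist_comm ..
    have c3 : (Γ).dist s π = (Γ).dist π s := SimpleGraph.dist_comm ..
    have c4 : (Γ).dist w ρ = (Γ).dist ρ w := SimpleGraph.dist_comm ..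
    omega


end AuxCayley

/-- (Lemma 9.2.) Let `G` be a group with a finite symmetric generating
set `S₀` (not containing the identity) whose Cayley graph is `δ`-hyperbolic, let
`D ≥ 8δ + 1`, and let `H` be a finite subgroup of `G`. Then every finite subset `S` of
`G` is contained in a finite `H`-invariant subset `T` such that the subgraph of the
1-skeleton of the Rips complex `P_D(G)` induced on `T` is dismantlable. -/
theorem rips_complex_invariant_dismantlable_subgraph {G : Type*} [Group G]
    (S₀ : Finset G) (hsym : ∀ s ∈ S₀, s⁻¹ ∈ S₀) (hone : (1 : G) ∉ S₀)
    (hgen : Subgroup.closure (S₀ : Set G) = ⊤)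
    (δ : ℕ) (hhyp : Hyperbolic (SimpleGraph.fromRel fun g h : G => g⁻¹ * h ∈ S₀) δ)
    (D : ℕ) (hD : 8 * δ + 1 ≤ D)
    (H : Subgroup G) (hHfin : (H : Set G).Finite)
    (S : Set G) (hSfin : S.Finite) :
    ∃ T : Set G, T.Finite ∧ S ⊆ T ∧ (∀ h ∈ H, (fun g => h * g) '' T = T) ∧
      DismantlableOn (ripsGraph (SimpleGraph.fromRel fun g h : G => g⁻¹ * h ∈ S₀) D) T := by
  classical
  have hc : (SimpleGraph.fromRel fun g h : G => g⁻¹ * h ∈ S₀).Connected :=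
    cayley_connected S₀ hone hgen
  set Γ' := (SimpleGraph.fromRel fun g h : G => g⁻¹ * h ∈ S₀) with hΓ'
  have hdm : ∀ a u v : G, Γ'.dist (a * u) (a * v) = Γ'.dist u v :=
    fun a u v => cayley_dist_mul' S₀ hc a u v
  obtain ⟨C, hCfin, hCne, hCinv, hCdiam⟩ :=
    exists_center S₀ hsym hc hdm (cayley_ball_finite' S₀ hsym hc) δ hhyp H hHfin
  set CF : Finset G := hCfin.toFinset with hCF
  have hCne' : CF.Nonempty := by
    obtain ⟨c, hcn⟩ := hCne
    exact ⟨c, hCfin.mem_toFinset.mpr hcn⟩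
  set gd : G → ℕ := fun x => CF.inf' hCne' (fun c => Γ'.dist x c) with hgd
  have hgd1 : ∀ x : G, ∃ c ∈ CF, gd x = Γ'.dist x c := by
    intro x
    obtain ⟨c, hcn, he⟩ := Finset.exists_mem_eq_inf' hCne' (fun c => Γ'.dist x c)
    exact ⟨c, hcn, he⟩
  have hgd2 : ∀ (x : G), ∀ c ∈ CF, gd x ≤ Γ'.dist x c := by
    intro x c hcn
    exact Finset.inf'_le _ hcn
  -- invariance of gd under H
  have hgdle : ∀ h ∈ H, ∀ x : G, gd (h * x) ≤ gd x := by
    intro h hh x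
    obtain ⟨c, hcn, he⟩ := hgd1 x
    have hhc : h * c ∈ CF := hCfin.mem_toFinset.mpr (hCinv h hh c (hCfin.mem_toFinset.mp hcn))
    have := hgd2 (h * x) (h * c) hhc
    rw [hdm h x c] at this
    omega
  have hgdinv : ∀ h ∈ H, ∀ x : G, gd (h * x) = gd x := by
    intro h hh x
    refine le_antisymm (hgdle h hh x) ?_
    have := hgdle h⁻¹ (H.inv_mem hh) (h * x)
    rw [show h⁻¹ * (h * x) = x by group] at this
    exact this
  set R : ℕ := hSfin.toFinset.sup gd with hR
  set T : Set G := {x : G | gd x ≤ R} with hT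
  have hTfin : T.Finite := by
    obtain ⟨c₀, hc₀⟩ := hCne'
    refine Set.Finite.subset (cayley_ball_finite' S₀ hsym hc c₀ (R + (4 * δ + 1))) ?_
    intro x hx
    simp only [hT, Set.mem_setOf_eq] at hx ⊢
    obtain ⟨c, hcn, he⟩ := hgd1 x
    have ht : Γ'.dist x c₀ ≤ Γ'.dist x c + Γ'.dist c c₀ := hc.dist_triangle
    have hd : Γ'.dist c c₀ ≤ 4 * δ + 1 :=
      hCdiam c (hCfin.mem_toFinset.mp hcn) c₀ (hCfin.mem_toFinset.mp hc₀)
    have hgoal : Γ'.dist x c₀ ≤ R + (4 * δ + 1) := by omega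
    exact hgoal
  have hST : S ⊆ T := by
    intro s hs
    simp only [hT, Set.mem_setOf_eq]
    exact Finset.le_sup (f := gd) (hSfin.mem_toFinset.mpr hs)
  have hHT : ∀ h ∈ H, (fun g => h * g) '' T = T := by
    intro h hh
    ext x
    constructor
    · rintro ⟨y, hy, rfl⟩
      simp only [hT, Set.mem_setOf_eq] at hy ⊢
      rw [hgdinv h hh y]
      exact hy
    · intro hx
      refine ⟨h⁻¹ * x, ?_, by group⟩
      simp only [hT, Set.mem_setOf_eq] at hx ⊢
      rw [hgdinv h⁻¹ (H.inv_mem hh) x]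
      exact hx
  refine ⟨T, hTfin, hST, hHT, ?_⟩
  -- dismantlability
  have hcoe : ↑(hTfin.toFinset) = T := hTfin.coe_toFinset
  rw [← hcoe]
  refine peel_to_dismantlable (ripsGraph Γ' D) gd T ?_ hTfin.toFinset (by rw [hcoe])
    (fun x hx hxF => absurd (hTfin.mem_toFinset.mpr hx) hxF)
  intro F hFT hdown hcard ρ hρF hρmax
  by_cases hcase : max (2 * δ) 1 ≤ gd ρ
  · -- main case
    obtain ⟨π, hdρπ, hgπ, hdom⟩ :=
      domination_step S₀ hc hhyp hD CF hCne'
        (fun x hx y hy => hCdiam x (hCfin.mem_toFinset.mp hx) y (hCfin.mem_toFinset.mp hy))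
        gd hgd1 hgd2 ρ hcase
    have hπT : π ∈ T := by
      have hρT : ρ ∈ T := hFT hρF
      simp only [hT, Set.mem_setOf_eq] at hρT ⊢
      omega
    have hπF : π ∈ F := by
      by_contra hπF
      have := hdown π hπT hπF ρ hρF
      omega
    have hπρ : π ≠ ρ := by
      intro he
      rw [he, SimpleGraph.dist_self] at hdρπ
      omega
    refine ⟨π, hπF, hπρ, ?_⟩
    intro w hwF hwN
    have hwF' : w ∈ F := hwF
    have hdρw : Γ'.dist ρ w ≤ D := by
      rcases Set.mem_insert_iff.mp hwN with rfl | hadj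
      · rw [SimpleGraph.dist_self]; omega
      · exact hadj.2
    have hdπw : Γ'.dist π w ≤ D := hdom w hdρw (hρmax w hwF')
    by_cases hwπ : w = π
    · exact Set.mem_insert_iff.mpr (Or.inl hwπ)
    · exact Set.mem_insert_iff.mpr (Or.inr ⟨fun he => hwπ he.symm, hdπw⟩)
  · -- bottom clique case
    obtain ⟨π, hπF, hπρ⟩ := Finset.exists_mem_ne (s := F) (by omega) ρ
    refine ⟨π, hπF, hπρ, ?_⟩
    intro w hwF _
    have hwF' : w ∈ F := hwF
    by_cases hwπ : w = π
    · exact Set.mem_insert_iff.mpr (Or.inl hwπ)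
    obtain ⟨cπ, hcπ, heπ⟩ := hgd1 π
    obtain ⟨cw, hcw, hew⟩ := hgd1 w
    have t1 : Γ'.dist π w ≤ Γ'.dist π cπ + Γ'.dist cπ w := hc.dist_triangle
    have t2 : Γ'.dist cπ w ≤ Γ'.dist cπ cw + Γ'.dist cw w := hc.dist_triangle
    have hd : Γ'.dist cπ cw ≤ 4 * δ + 1 :=
      hCdiam cπ (hCfin.mem_toFinset.mp hcπ) cw (hCfin.mem_toFinset.mp hcw)
    have hcm : Γ'.dist cw w = Γ'.dist w cw := SimpleGraph.dist_comm ..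
    have h1 := hρmax π hπF
    have h2 := hρmax w hwF'
    have hdπw : Γ'.dist π w ≤ D := by omega
    exact Set.mem_insert_iff.mpr (Or.inr ⟨fun he => hwπ he.symm, hdπw⟩)
end

section
/- Let T be a finite tree (a finite connected acyclic simple graph with at least one vertex) and let D ≥ 1. Then the graph on the vertex set of T in which two distinct vertices are adjacent if and only if their graph distance in T is at most D is dismantlable. -/
open SimpleGraph

variable {V : Type*}

section Aux
set_option linter.unusedSectionVars false
variable {V : Type*} [DecidableEq V] {T : SimpleGraph V}

lemma myIsPath_concat {u v w : V} {p : T.Walk u v} (hp : p.IsPath) (h : T.Adj v w)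
    (hw : w ∉ p.support) : (p.concat h).IsPath := by
  rw [← Walk.isPath_reverse_iff, Walk.reverse_concat]
  exact hp.reverse.cons (by simp [Walk.support_reverse, hw])

lemma myDistSplit (hc : T.Connected) {u v c : V} (p : T.Walk u v)
    (hp : p.length = T.dist u v) (hcs : c ∈ p.support) :
    T.dist u c + T.dist c v = T.dist u v := by
  have h1 := SimpleGraph.dist_le (p.takeUntil c hcs)
  have h2 := SimpleGraph.dist_le (p.dropUntil c hcs)
  have h3 : (p.takeUntil c hcs).length + (p.dropUntil c hcs).length = p.length := by
    have := congrArg Walk.length (p.take_spec hcs)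
    rwa [Walk.length_append] at this
  have h4 := hc.dist_triangle (u := u) (v := c) (w := v)
  omega

lemma myParentExists (hc : T.Connected) {σ ρ : V} (h : ρ ≠ σ) :
    ∃ π, T.Adj ρ π ∧ T.dist σ π + 1 = T.dist σ ρ := by
  obtain ⟨p, hp⟩ := hc.exists_walk_length_eq_dist ρ σ
  have hpos : 0 < p.length := by rw [hp]; exact hc.pos_dist_of_ne h
  cases p with
  | nil => simp at hpos
  | @cons _ x _ hadj q =>
    refine ⟨x, hadj, ?_⟩
    have h1 : T.dist x σ ≤ q.length := SimpleGraph.dist_le q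
    have h2 : T.dist ρ σ ≤ T.dist ρ x + T.dist x σ := hc.dist_triangle
    have h3 : T.dist ρ x = 1 := dist_eq_one_iff_adj.mpr hadj
    have h4 : (Walk.cons hadj q).length = q.length + 1 := by simp
    rw [SimpleGraph.dist_comm (u := σ) (v := x), SimpleGraph.dist_comm (u := σ) (v := ρ)]
    omega

lemma myPathUnique (hT : T.IsTree) {u v : V} {p q : T.Walk u v}
    (hp : p.IsPath) (hq : q.IsPath) : p = q := by
  have := isAcyclic_iff_path_unique.mp hT.2 ⟨p, hp⟩ ⟨q, hq⟩
  exact congrArg Subtype.val this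

lemma myNbrLevel (hT : T.IsTree) (σ : V) {ρ x : V} (h : T.Adj ρ x) :
    T.dist σ x + 1 = T.dist σ ρ ∨ T.dist σ ρ + 1 = T.dist σ x := by
  have hc := hT.1
  have hne : ρ ≠ x := h.ne
  have h1 : T.dist ρ x = 1 := dist_eq_one_iff_adj.mpr h
  have t1 : T.dist σ x ≤ T.dist σ ρ + 1 := by
    have := hc.dist_triangle (u := σ) (v := ρ) (w := x); omega
  have t2 : T.dist σ ρ ≤ T.dist σ x + 1 := by
    have := hc.dist_triangle (u := σ) (v := x) (w := ρ)
    have h2 : T.dist x ρ = 1 := by rwa [SimpleGraph.dist_comm]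
    omega
  have hneq : T.dist σ x ≠ T.dist σ ρ := by
    intro heq
    obtain ⟨p, hpp, hpl⟩ := hc.exists_path_of_dist σ ρ
    obtain ⟨q, hqp, hql⟩ := hc.exists_path_of_dist σ x
    have hρq : ρ ∉ q.support := by
      intro hmem
      have := myDistSplit hc q hql hmem
      have h2 : T.dist ρ x = 1 := h1
      omega
    have hq' : (q.concat h.symm).IsPath := myIsPath_concat hqp h.symm hρq
    have := myPathUnique hT hpp hq'
    have hl := congrArg Walk.length this
    rw [Walk.length_concat] at hl
    omega
  omega

lemma myParentUnique (hT : T.IsTree) (σ : V) {ρ π π' : V} (h : T.Adj ρ π) (h' : T.Adj ρ π')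
    (hd : T.dist σ π + 1 = T.dist σ ρ) (hd' : T.dist σ π' + 1 = T.dist σ ρ) : π = π' := by
  have hc := hT.1
  by_contra hne
  obtain ⟨p, hpp, hpl⟩ := hc.exists_path_of_dist σ π
  obtain ⟨p', hpp', hpl'⟩ := hc.exists_path_of_dist σ π'
  have hρp : ρ ∉ p.support := by
    intro hmem
    have := myDistSplit hc p hpl hmem
    have h2 : T.dist ρ π = 1 := dist_eq_one_iff_adj.mpr h
    omega
  have hρp' : ρ ∉ p'.support := by
    intro hmem
    have := myDistSplit hc p' hpl' hmem
    have h2 : T.dist ρ π' = 1 := dist_eq_one_iff_adj.mpr h'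
    omega
  have hq : (p.concat h.symm).IsPath := myIsPath_concat hpp h.symm hρp
  have hq' : (p'.concat h'.symm).IsPath := myIsPath_concat hpp' h'.symm hρp'
  have heq := myPathUnique hT hq hq'
  have hsup : π ∈ (p'.concat h'.symm).support := by
    rw [← heq, Walk.support_concat]
    simp only [List.concat_eq_append, List.mem_append, List.mem_singleton]
    exact Or.inl (Walk.end_mem_support p)
  rw [Walk.support_concat] at hsup
  simp only [List.concat_eq_append, List.mem_append, List.mem_singleton] at hsup
  rcases hsup with hmem | hmem
  · have := myDistSplit hc p' hpl' hmem
    have : π = π' := by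
      have h0 : T.dist π π' = 0 := by omega
      exact (hc.dist_eq_zero_iff).mp h0
    exact hne this
  · exact h.ne' hmem

lemma myKey (hT : T.IsTree) (σ : V) : ∀ n, ∀ ρ w π : V, T.dist ρ w = n → w ≠ ρ →
    T.dist σ w ≤ T.dist σ ρ → T.Adj ρ π → T.dist σ π + 1 = T.dist σ ρ →
    T.dist π w + 1 ≤ n := by
  have hc := hT.1
  intro n
  induction n using Nat.strong_induction_on with
  | _ n ih =>
    intro ρ w π hn hne hle hadj hpar
    have hpos : 0 < n := by
      rw [← hn]; exact hc.pos_dist_of_ne (fun hh => hne hh.symm)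
    obtain ⟨p, hpl⟩ := hc.exists_walk_length_eq_dist ρ w
    cases p with
    | nil => exact absurd rfl hne
    | @cons _ x _ hx q =>
      have hql : T.dist x w = q.length := by
        have h1 := SimpleGraph.dist_le q
        have h2 : T.dist ρ w ≤ T.dist ρ x + T.dist x w := hc.dist_triangle
        have h3 : T.dist ρ x = 1 := dist_eq_one_iff_adj.mpr hx
        have h4 : (Walk.cons hx q).length = q.length + 1 := by simp
        omega
      have hqlen : q.length = n - 1 := by
        have h4 : (Walk.cons hx q).length = q.length + 1 := by simp
        rw [hn] at hpl; omega
      rcases myNbrLevel hT σ hx with hlev | hlev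
      · -- x is the parent, so x = π
        have hxπ : x = π := myParentUnique hT σ hx hadj hlev hpar
        rw [← hxπ]
        omega
      · -- x is a child; apply IH with ρ and x swapped
        have hwx : w ≠ x := by
          intro hh; rw [hh] at hle; omega
        have := ih (n-1) (by omega) x w ρ (by omega) hwx (by omega) hx.symm (by omega)
        have h0 : T.dist ρ w = n := hn
        omega
end Aux

lemma myBuild {V : Type*} [DecidableEq V] {T : SimpleGraph V} (hT : T.IsTree) (σ : V)
    (D : ℕ) (hD : 1 ≤ D) :
    ∀ n (S : Finset V), S.card ≤ n → σ ∈ S →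
      (∀ u ∈ S, ∀ v, T.dist σ v < T.dist σ u → v ∈ S) →
      ∃ l : List V, l.Nodup ∧ (∀ v, v ∈ l ↔ v ∈ S) ∧
        ∀ (i : ℕ) (h : i < l.length), i < l.length - 1 →
          ∃ π, DominatedIn (ripsGraph T D) {w | w ∈ l.drop i} (l[i]'h) π := by
  intro n
  induction n with
  | zero =>
    intro S hcard hσ _
    exact absurd (Finset.card_pos.mpr ⟨σ, hσ⟩) (by omega)
  | succ n ih =>
    intro S hcard hσ hclosed
    by_cases hall : ∀ ρ ∈ S, ρ = σ
    · refine ⟨[σ], List.nodup_singleton σ, ?_, ?_⟩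
      · intro v
        simp only [List.mem_singleton]
        exact ⟨fun h => h ▸ hσ, fun hv => hall v hv⟩
      · intro i h hi
        simp only [List.length_singleton] at h hi
        omega
    · push_neg at hall
      obtain ⟨ρ0, hρ0S, hρ0ne⟩ := hall
      have hfil : (S.filter (· ≠ σ)).Nonempty :=
        ⟨ρ0, Finset.mem_filter.mpr ⟨hρ0S, hρ0ne⟩⟩
      obtain ⟨ρ, hρmem, hρmax⟩ := Finset.exists_max_image (S.filter (· ≠ σ)) (T.dist σ) hfil
      rw [Finset.mem_filter] at hρmem
      obtain ⟨hρS, hρne⟩ := hρmem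
      have hρne : ρ ≠ σ := by simpa using hρne
      have hmax : ∀ u ∈ S, T.dist σ u ≤ T.dist σ ρ := by
        intro u hu
        by_cases hu' : u = σ
        · subst hu'; simp [SimpleGraph.dist_self]
        · exact hρmax u (Finset.mem_filter.mpr ⟨hu, by simpa using hu'⟩)
      obtain ⟨π, hπadj, hπpar⟩ := myParentExists hT.1 hρne
      have hπS : π ∈ S := hclosed ρ hρS π (by omega)
      have hπρ : π ≠ ρ := hπadj.ne'
      have hσS' : σ ∈ S.erase ρ := Finset.mem_erase.mpr ⟨fun h => hρne h.symm, hσ⟩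
      have hclosed' : ∀ u ∈ S.erase ρ, ∀ v, T.dist σ v < T.dist σ u → v ∈ S.erase ρ := by
        intro u hu v hv
        rw [Finset.mem_erase] at hu
        refine Finset.mem_erase.mpr ⟨?_, hclosed u hu.2 v hv⟩
        rintro rfl
        exact absurd (hmax u hu.2) (by omega)
      have hcard' : (S.erase ρ).card ≤ n := by
        have := Finset.card_erase_of_mem hρS
        have := Finset.card_pos.mpr ⟨ρ, hρS⟩
        omega
      obtain ⟨l', hnd', hmem', hdom'⟩ := ih (S.erase ρ) hcard' hσS' hclosed'
      refine ⟨ρ :: l', ?_, ?_, ?_⟩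
      · refine List.nodup_cons.mpr ⟨?_, hnd'⟩
        intro hmem
        exact (Finset.mem_erase.mp ((hmem' ρ).mp hmem)).1 rfl
      · intro v
        simp only [List.mem_cons, hmem' v, Finset.mem_erase]
        constructor
        · rintro (rfl | ⟨_, h⟩)
          exacts [hρS, h]
        · intro hv
          by_cases hvρ : v = ρ
          · exact Or.inl hvρ
          · exact Or.inr ⟨hvρ, hv⟩
      · intro i h hi
        cases i with
        | zero =>
          refine ⟨π, ?_, ?_, ?_⟩
          · simp only [Set.mem_setOf_eq, List.drop_zero, List.mem_cons]
            exact Or.inr ((hmem' π).mpr (Finset.mem_erase.mpr ⟨hπρ, hπS⟩))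
          · simpa only [List.getElem_cons_zero] using hπρ
          · intro w hw hwρ
            have hwS : w ∈ S := by
              simp only [Set.mem_setOf_eq, List.drop_zero, List.mem_cons] at hw
              rcases hw with rfl | hw
              · exact hρS
              · exact (Finset.mem_erase.mp ((hmem' w).mp hw)).2
            simp only [List.getElem_cons_zero, closedNbhd, Set.mem_insert_iff,
              Set.mem_setOf_eq] at hwρ ⊢
            rcases hwρ with rfl | hadj
            · right
              refine ⟨hπρ, ?_⟩
              have : T.dist π w = 1 := dist_eq_one_iff_adj.mpr hπadj.symm
              omega
            · obtain ⟨hρw, hdist⟩ := hadj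
              by_cases hwπ : w = π
              · exact Or.inl hwπ
              · right
                refine ⟨fun hh => hwπ hh.symm, ?_⟩
                have := myKey hT σ (T.dist ρ w) ρ w π rfl (Ne.symm hρw)
                  (hmax w hwS) hπadj hπpar
                omega
        | succ i =>
          have h' : i < l'.length := by
            simp only [List.length_cons] at h
            omega
          have hi' : i < l'.length - 1 := by
            simp only [List.length_cons] at hi
            omega
          exact hdom' i h' hi'

/-- For a finite tree `T` and `D ≥ 1`, the graph obtained by joining
vertices at tree-distance at most `D` is dismantlable. -/
theorem rips_of_tree_dismantlable {V : Type*} [Fintype V] [Nonempty V]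
    (T : SimpleGraph V) (hT : T.IsTree) (D : ℕ) (hD : 1 ≤ D) :
    Dismantlable (ripsGraph T D) := by
  classical
  obtain ⟨σ⟩ := (inferInstance : Nonempty V)
  obtain ⟨l, hnd, hmem, hdom⟩ := myBuild hT σ D hD Finset.univ.card Finset.univ
    (le_refl _) (Finset.mem_univ σ) (fun u _ v _ => Finset.mem_univ v)
  exact ⟨l, hnd, fun v => ⟨fun _ => Set.mem_univ v, fun _ => (hmem v).mpr (Finset.mem_univ v)⟩,
    hdom⟩
end
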